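/- Let 𝒜 : ℝ^{n×n} → ℝ^m satisfy 4r-RIP with constant δ_{4r}, let X ∈ ℝ^{n×r}, and define ∇f(U) := Σ_{k=1}^m ⟨A_k, UUᵀ − XXᵀ⟩ A_k U and ∇F(U) := (UUᵀ − XXᵀ)U. Then for any U ∈ ℝ^{n×r} with dist(U, X) ≤ (1/4)‖X‖_{op}: (i) for every H ∈ ℝ^{n×r}, |⟨∇F(U) − ∇f(U), H⟩| ≤ δ_{4r}·‖UUᵀ − XXᵀ‖_F·‖HUᵀ‖_F; and (ii) ‖∇f(U) − ∇F(U)‖_F ≤ δ_{4r}·‖UUᵀ − XXᵀ‖_F·‖U‖_{op}. -/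

import Mathlib

open Matrix

noncomputable def vnorm {ι : Type*} [Fintype ι] (v : ι → ℝ) : ℝ :=
  Real.sqrt (∑ i, v i ^ 2)

noncomputable def frob {α β : Type*} [Fintype α] [Fintype β] (M : Matrix α β ℝ) : ℝ :=
  Real.sqrt (∑ i, ∑ j, M i j ^ 2)

noncomputable def sval {α β : Type*} [Fintype α] [Fintype β] (M : Matrix α β ℝ) (k : ℕ) : ℝ :=
  sSup { t : ℝ | ∃ V : Submodule ℝ (β → ℝ), Module.finrank ℝ V = k ∧
    ∀ v ∈ V, t * vnorm v ≤ vnorm (M.mulVec v) }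

noncomputable def opNorm {α β : Type*} [Fintype α] [Fintype β] (M : Matrix α β ℝ) : ℝ :=
  sval M 1

noncomputable def pdist {α ρ : Type*} [Fintype α] [Fintype ρ] [DecidableEq ρ]
    (U X : Matrix α ρ ℝ) : ℝ :=
  sInf { d : ℝ | ∃ R : Matrix ρ ρ ℝ, Rᵀ * R = 1 ∧ d = frob (U - X * R) }

noncomputable def mip {α β : Type*} [Fintype α] [Fintype β] (A B : Matrix α β ℝ) : ℝ :=
  ∑ i, ∑ j, A i j * B i j

noncomputable def mapA {m : ℕ} {α β : Type*} [Fintype α] [Fintype β]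
    (A : Fin m → Matrix α β ℝ) (Z : Matrix α β ℝ) : Fin m → ℝ :=
  fun k => mip (A k) Z

def HasRIP {m n₁ n₂ : ℕ} (A : Fin m → Matrix (Fin n₁) (Fin n₂) ℝ) (s : ℕ) (δ : ℝ) : Prop :=
  ∀ Z : Matrix (Fin n₁) (Fin n₂) ℝ, Z.rank ≤ s →
    (1 - δ) * frob Z ^ 2 ≤ ∑ k, mapA A Z k ^ 2 ∧
      ∑ k, mapA A Z k ^ 2 ≤ (1 + δ) * frob Z ^ 2

noncomputable def gradU {m n₁ n₂ r : ℕ} (A : Fin m → Matrix (Fin n₁) (Fin n₂) ℝ)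
    (M : Matrix (Fin n₁) (Fin n₂) ℝ)
    (U : Matrix (Fin n₁) (Fin r) ℝ) (V : Matrix (Fin n₂) (Fin r) ℝ) :
    Matrix (Fin n₁) (Fin r) ℝ :=
  (∑ k, mip (A k) (U * Vᵀ - M) • (A k * V)) + (1 / 4 : ℝ) • (U * (Uᵀ * U - Vᵀ * V))

noncomputable def gradV {m n₁ n₂ r : ℕ} (A : Fin m → Matrix (Fin n₁) (Fin n₂) ℝ)
    (M : Matrix (Fin n₁) (Fin n₂) ℝ)
    (U : Matrix (Fin n₁) (Fin r) ℝ) (V : Matrix (Fin n₂) (Fin r) ℝ) :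
    Matrix (Fin n₂) (Fin r) ℝ :=
  (∑ k, mip (A k) (U * Vᵀ - M) • ((A k)ᵀ * U)) + (1 / 4 : ℝ) • (V * (Vᵀ * V - Uᵀ * U))

noncomputable def gradg {m n₁ n₂ r : ℕ} (A : Fin m → Matrix (Fin n₁) (Fin n₂) ℝ)
    (M : Matrix (Fin n₁) (Fin n₂) ℝ)
    (U : Matrix (Fin n₁) (Fin r) ℝ) (V : Matrix (Fin n₂) (Fin r) ℝ) :
    Matrix (Fin n₁ ⊕ Fin n₂) (Fin r) ℝ :=
  Matrix.fromRows (gradU A M U V) (gradV A M U V)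

section helpers
variable {α β : Type*} [Fintype α] [Fintype β]

lemma mip_comm (A B : Matrix α β ℝ) : mip A B = mip B A := by
  simp [mip, mul_comm]

lemma mip_add_right (A B C : Matrix α β ℝ) : mip A (B + C) = mip A B + mip A C := by
  simp [mip, mul_add, Finset.sum_add_distrib]

lemma mip_smul_right (c : ℝ) (A B : Matrix α β ℝ) : mip A (c • B) = c * mip A B := by
  simp only [mip, Matrix.smul_apply, smul_eq_mul, Finset.mul_sum]
  exact Finset.sum_congr rfl fun i _ => Finset.sum_congr rfl fun j _ => by ring

lemma mip_add_left (A B C : Matrix α β ℝ) : mip (A + B) C = mip A C + mip B C := by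
  rw [mip_comm, mip_add_right, mip_comm C A, mip_comm C B]

lemma mip_smul_left (c : ℝ) (A B : Matrix α β ℝ) : mip (c • A) B = c * mip A B := by
  rw [mip_comm, mip_smul_right, mip_comm]

lemma mip_sub_left (A B C : Matrix α β ℝ) : mip (A - B) C = mip A C - mip B C := by
  have : A - B = A + (-1 : ℝ) • B := by
    rw [neg_one_smul]; exact (sub_eq_add_neg A B)
  rw [this, mip_add_left, mip_smul_left]; ring

lemma mip_neg_left (A B : Matrix α β ℝ) : mip (-A) B = - mip A B := by
  have : (-A) = (-1 : ℝ) • A := by rw [neg_one_smul]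
  rw [this, mip_smul_left]; ring

lemma mip_sum_left {ι : Type*} (s : Finset ι) (f : ι → Matrix α β ℝ) (B : Matrix α β ℝ) :
    mip (∑ i ∈ s, f i) B = ∑ i ∈ s, mip (f i) B := by
  classical
  induction s using Finset.induction_on with
  | empty => simp [mip]
  | insert _ _ h ih => rw [Finset.sum_insert h, mip_add_left, ih, Finset.sum_insert h]

lemma frob_nonneg (M : Matrix α β ℝ) : 0 ≤ frob M := Real.sqrt_nonneg _

lemma frob_sq (M : Matrix α β ℝ) : frob M ^ 2 = mip M M := by
  rw [frob, Real.sq_sqrt (by positivity)]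
  simp [mip, pow_two]

lemma eq_zero_of_frob_eq_zero {M : Matrix α β ℝ} (h : frob M = 0) : M = 0 := by
  have h2 : ∑ i, ∑ j, M i j ^ 2 ≤ 0 := Real.sqrt_eq_zero'.mp h
  have h3 : ∑ i, ∑ j, M i j ^ 2 = 0 := le_antisymm h2 (by positivity)
  ext i j
  have h4 := (Finset.sum_eq_zero_iff_of_nonneg (fun i _ => by positivity)).mp h3 i (Finset.mem_univ i)
  have h5 := (Finset.sum_eq_zero_iff_of_nonneg (fun j _ => by positivity)).mp h4 j (Finset.mem_univ j)
  have h6 : M i j = 0 := pow_eq_zero_iff two_ne_zero |>.mp h5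
  simpa using h6

lemma mip_eq_trace (A B : Matrix α β ℝ) : mip A B = (Aᵀ * B).trace := by
  rw [mip, Matrix.trace]
  simp only [Matrix.diag, Matrix.mul_apply, Matrix.transpose_apply]
  rw [Finset.sum_comm]


lemma mip_mul_right {n r : Type*} [Fintype n] [Fintype r] (Y : Matrix n n ℝ) (U H : Matrix n r ℝ) :
    mip (Y * U) H = mip Y (H * Uᵀ) := by
  rw [mip_eq_trace, mip_eq_trace, Matrix.transpose_mul, Matrix.mul_assoc,
    Matrix.trace_mul_comm, Matrix.mul_assoc]

lemma vnorm_nonneg (v : β → ℝ) : 0 ≤ vnorm v := Real.sqrt_nonneg _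

lemma vnorm_sq (v : β → ℝ) : vnorm v ^ 2 = ∑ i, v i ^ 2 := Real.sq_sqrt (by positivity)

lemma vnorm_zero : vnorm (0 : β → ℝ) = 0 := by simp [vnorm]

lemma vnorm_smul (c : ℝ) (v : β → ℝ) : vnorm (c • v) = |c| * vnorm v := by
  rw [vnorm, vnorm, ← Real.sqrt_sq_eq_abs, ← Real.sqrt_mul (sq_nonneg c)]
  congr 1
  rw [Finset.mul_sum]
  exact Finset.sum_congr rfl fun i _ => by simp [mul_pow]

lemma vnorm_pos {v : β → ℝ} (h : v ≠ 0) : 0 < vnorm v := by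
  obtain ⟨i, hi⟩ := Function.ne_iff.mp h
  have hi' : v i ≠ 0 := by simpa using hi
  have : 0 < ∑ j, v j ^ 2 :=
    Finset.sum_pos' (fun j _ => sq_nonneg _)
      ⟨i, Finset.mem_univ i, by
        have := sq_nonneg (v i)
        rcases this.lt_or_eq with h' | h'
        · exact h'
        · exact absurd (pow_eq_zero_iff (two_ne_zero)|>.mp h'.symm) hi'⟩
  exact Real.sqrt_pos.mpr this

lemma le_of_sq_le_sq' {a b : ℝ} (ha : 0 ≤ a) (hb : 0 ≤ b) (h : a ^ 2 ≤ b ^ 2) : a ≤ b := by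
  nlinarith

lemma vnorm_mulVec_le_frob (M : Matrix α β ℝ) (v : β → ℝ) :
    vnorm (M.mulVec v) ≤ frob M * vnorm v := by
  apply le_of_sq_le_sq' (vnorm_nonneg _) (mul_nonneg (frob_nonneg _) (vnorm_nonneg _))
  rw [mul_pow, vnorm_sq, vnorm_sq, frob, Real.sq_sqrt (by positivity), Finset.sum_mul]
  apply Finset.sum_le_sum
  intro i _
  have : M.mulVec v i = ∑ j, M i j * v j := by simp [Matrix.mulVec, dotProduct]
  rw [this]
  exact Finset.sum_mul_sq_le_sq_mul_sq Finset.univ (M i) v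

def opS (M : Matrix α β ℝ) : Set ℝ :=
  { t : ℝ | ∃ V : Submodule ℝ (β → ℝ), Module.finrank ℝ V = 1 ∧
    ∀ v ∈ V, t * vnorm v ≤ vnorm (M.mulVec v) }

lemma opNorm_eq (M : Matrix α β ℝ) : opNorm M = sSup (opS M) := rfl

lemma opS_bddAbove (M : Matrix α β ℝ) : BddAbove (opS M) := by
  refine ⟨frob M, ?_⟩
  rintro t ⟨V, hV, hVt⟩
  have hne : V ≠ ⊥ := by
    intro h; rw [h, finrank_bot] at hV; simp at hV
  obtain ⟨v, hvV, hv0⟩ := Submodule.ne_bot_iff V |>.mp hne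
  have h1 := hVt v hvV
  have h2 := vnorm_mulVec_le_frob M v
  have hv : 0 < vnorm v := vnorm_pos hv0
  exact le_of_mul_le_mul_right (h1.trans h2) hv

lemma vnorm_mulVec_le_opNorm (M : Matrix α β ℝ) (v : β → ℝ) :
    vnorm (M.mulVec v) ≤ opNorm M * vnorm v := by
  rcases eq_or_ne v 0 with rfl | hv
  · simp [Matrix.mulVec_zero, vnorm_zero]
  · have hvp : 0 < vnorm v := vnorm_pos hv
    have hv' : vnorm v ≠ 0 := ne_of_gt hvp
    have ht : vnorm (M.mulVec v) / vnorm v ∈ opS M := by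
      refine ⟨Submodule.span ℝ {v}, finrank_span_singleton hv, ?_⟩
      intro w hw
      obtain ⟨c, rfl⟩ := Submodule.mem_span_singleton.mp hw
      rw [vnorm_smul, Matrix.mulVec_smul, vnorm_smul]
      apply le_of_eq
      field_simp
    have hle := le_csSup (opS_bddAbove M) ht
    calc vnorm (M.mulVec v) = vnorm (M.mulVec v) / vnorm v * vnorm v := by field_simp
      _ ≤ opNorm M * vnorm v := mul_le_mul_of_nonneg_right hle (vnorm_nonneg v)

lemma opNorm_nonneg (M : Matrix α β ℝ) : 0 ≤ opNorm M := by
  rcases isEmpty_or_nonempty β with hβ | hβ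
  · have hempty : opS M = ∅ := by
      ext t
      simp only [opS, Set.mem_setOf_eq, Set.mem_empty_iff_false, iff_false]
      rintro ⟨V, hV, -⟩
      haveI : Subsingleton (β → ℝ) := ⟨fun a b => funext fun i => (IsEmpty.false i).elim⟩
      haveI : Subsingleton V := ⟨fun a b => Subtype.ext (Subsingleton.elim _ _)⟩
      rw [Module.finrank_zero_of_subsingleton] at hV
      exact one_ne_zero hV.symm
    rw [opNorm_eq, hempty, Real.sSup_empty]
  · obtain ⟨i⟩ := hβ
    have hv : (fun _ : β => (1:ℝ)) ≠ 0 := by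
      intro h
      have := congrFun h i
      simp at this
    have h1 := vnorm_mulVec_le_opNorm M (fun _ => (1:ℝ))
    have h2 := vnorm_nonneg (M.mulVec (fun _ => (1:ℝ)))
    have h3 := vnorm_pos hv
    nlinarith

lemma frob_mul_transpose_le {n r : Type*} [Fintype n] [Fintype r]
    (D : Matrix n r ℝ) (U : Matrix n r ℝ) :
    frob (D * Uᵀ) ≤ opNorm U * frob D := by
  apply le_of_sq_le_sq' (frob_nonneg _) (mul_nonneg (opNorm_nonneg _) (frob_nonneg _))
  rw [frob, Real.sq_sqrt (by positivity), mul_pow]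
  have hfr : frob D ^ 2 = ∑ i, ∑ j, D i j ^ 2 := Real.sq_sqrt (by positivity)
  rw [hfr, Finset.mul_sum]
  apply Finset.sum_le_sum
  intro i _
  have h1 : ∀ j, (D * Uᵀ) i j = U.mulVec (fun k => D i k) j := by
    intro j
    simp [Matrix.mul_apply, Matrix.mulVec, dotProduct, Matrix.transpose_apply, mul_comm]
  calc ∑ j, (D * Uᵀ) i j ^ 2 = vnorm (U.mulVec (fun k => D i k)) ^ 2 := by
        rw [vnorm_sq]; exact Finset.sum_congr rfl fun j _ => by rw [h1 j]
    _ ≤ (opNorm U * vnorm (fun k => D i k)) ^ 2 :=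
        pow_le_pow_left₀ (vnorm_nonneg _) (vnorm_mulVec_le_opNorm U _) 2
    _ = opNorm U ^ 2 * ∑ k, D i k ^ 2 := by rw [mul_pow, vnorm_sq]

lemma rank_add_le' {n₁ n₂ : ℕ} (A B : Matrix (Fin n₁) (Fin n₂) ℝ) :
    (A + B).rank ≤ A.rank + B.rank := by
  have h : LinearMap.range (A + B).mulVecLin ≤
      LinearMap.range A.mulVecLin ⊔ LinearMap.range B.mulVecLin := by
    rintro x ⟨v, rfl⟩
    rw [Matrix.mulVecLin_add]
    exact Submodule.add_mem_sup (LinearMap.mem_range_self _ v) (LinearMap.mem_range_self _ v)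
  exact (Submodule.finrank_mono h).trans
    (Submodule.finrank_add_le_finrank_add_finrank _ _)

lemma rank_smul_le' {n₁ n₂ : ℕ} (c : ℝ) (A : Matrix (Fin n₁) (Fin n₂) ℝ) :
    (c • A).rank ≤ A.rank := by
  apply Submodule.finrank_mono
  rintro x ⟨v, rfl⟩
  have : (c • A).mulVecLin v = c • (A.mulVecLin v) := by
    simp [Matrix.mulVecLin_apply, Matrix.smul_mulVec]
  rw [this]
  exact Submodule.smul_mem _ _ (LinearMap.mem_range_self _ v)

end helpers

section cross
variable {n r m : ℕ}

lemma mapA_comb (A : Fin m → Matrix (Fin n) (Fin n) ℝ) (Y Z : Matrix (Fin n) (Fin n) ℝ)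
    (c d : ℝ) (k : Fin m) :
    mapA A (c • Y + d • Z) k = c * mapA A Y k + d * mapA A Z k := by
  show mip (A k) (c • Y + d • Z) = c * mip (A k) Y + d * mip (A k) Z
  rw [mip_add_right, mip_smul_right, mip_smul_right]

lemma sum_mapA_comb_sq (A : Fin m → Matrix (Fin n) (Fin n) ℝ) (Y Z : Matrix (Fin n) (Fin n) ℝ)
    (c d : ℝ) :
    ∑ k, mapA A (c • Y + d • Z) k ^ 2 =
      c ^ 2 * ∑ k, mapA A Y k ^ 2 + 2 * c * d * ∑ k, mapA A Y k * mapA A Z k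
        + d ^ 2 * ∑ k, mapA A Z k ^ 2 := by
  simp only [mapA_comb]
  rw [Finset.mul_sum, Finset.mul_sum, Finset.mul_sum, ← Finset.sum_add_distrib,
    ← Finset.sum_add_distrib]
  exact Finset.sum_congr rfl fun k _ => by ring

lemma frob_comb_sq (Y Z : Matrix (Fin n) (Fin n) ℝ) (c d : ℝ) :
    frob (c • Y + d • Z) ^ 2 =
      c ^ 2 * frob Y ^ 2 + 2 * c * d * mip Y Z + d ^ 2 * frob Z ^ 2 := by
  rw [frob_sq, mip_add_right, mip_add_left, mip_add_left, mip_smul_left, mip_smul_left,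
    mip_smul_left, mip_smul_left, mip_smul_right, mip_smul_right, mip_smul_right,
    mip_smul_right, frob_sq, frob_sq, mip_comm Z Y]
  ring

lemma rank_comb_le (Y Z : Matrix (Fin n) (Fin n) ℝ) (hY : Y.rank ≤ 2 * r) (hZ : Z.rank ≤ r)
    (c d : ℝ) : (c • Y + d • Z).rank ≤ 4 * r := by
  have h1 := rank_add_le' (c • Y) (d • Z)
  have h2 := rank_smul_le' c Y
  have h3 := rank_smul_le' d Z
  omega

lemma cross_rip (A : Fin m → Matrix (Fin n) (Fin n) ℝ) (δ : ℝ)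
    (hRIP : HasRIP A (4 * r) δ) (Y Z : Matrix (Fin n) (Fin n) ℝ)
    (hY : Y.rank ≤ 2 * r) (hZ : Z.rank ≤ r) :
    |∑ k, mapA A Y k * mapA A Z k - mip Y Z| ≤ δ * frob Y * frob Z := by
  rcases eq_or_ne (frob Y) 0 with hpy | hpy
  · have hY0 : Y = 0 := eq_zero_of_frob_eq_zero hpy
    subst hY0
    have : ∀ k, mapA A (0 : Matrix (Fin n) (Fin n) ℝ) k = 0 := by
      intro k; show mip (A k) 0 = 0; simp [mip]
    simp [this, mip, hpy]
  rcases eq_or_ne (frob Z) 0 with hpz | hpz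
  · have hZ0 : Z = 0 := eq_zero_of_frob_eq_zero hpz
    subst hZ0
    have : ∀ k, mapA A (0 : Matrix (Fin n) (Fin n) ℝ) k = 0 := by
      intro k; show mip (A k) 0 = 0; simp [mip]
    simp [this, mip, hpz]
  have hpy' : 0 < frob Y := lt_of_le_of_ne (frob_nonneg Y) (Ne.symm hpy)
  have hpz' : 0 < frob Z := lt_of_le_of_ne (frob_nonneg Z) (Ne.symm hpz)
  obtain ⟨low1, up1⟩ := hRIP (frob Z • Y + frob Y • Z) (rank_comb_le Y Z hY hZ _ _)
  obtain ⟨low2, up2⟩ := hRIP (frob Z • Y + (-(frob Y)) • Z) (rank_comb_le Y Z hY hZ _ _)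
  rw [sum_mapA_comb_sq, frob_comb_sq] at low1 up1 low2 up2
  set py := frob Y
  set pz := frob Z
  set sy := ∑ k, mapA A Y k ^ 2
  set sz := ∑ k, mapA A Z k ^ 2
  set syz := ∑ k, mapA A Y k * mapA A Z k
  set mm := mip Y Z
  have hP : 0 < 4 * (py * pz) := by positivity
  rw [abs_le]
  constructor
  · -- -(δ py pz) ≤ syz - mm  from low1, up2
    have key : 4 * (py * pz) * (-(δ * py * pz)) ≤ 4 * (py * pz) * (syz - mm) := by
      nlinarith [low1, up2]
    exact le_of_mul_le_mul_left (by linarith [key]) hP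
  · have key : 4 * (py * pz) * (syz - mm) ≤ 4 * (py * pz) * (δ * py * pz) := by
      nlinarith [up1, low2]
    exact le_of_mul_le_mul_left (by linarith [key]) hP

end cross

section main
variable {n r m : ℕ}

lemma rank_Y_le (U X : Matrix (Fin n) (Fin r) ℝ) : (U * Uᵀ - X * Xᵀ).rank ≤ 2 * r := by
  have h0 : U * Uᵀ - X * Xᵀ = U * Uᵀ + (-1 : ℝ) • (X * Xᵀ) := by
    rw [neg_one_smul]; exact sub_eq_add_neg _ _
  rw [h0]
  have h1 := rank_add_le' (U * Uᵀ) ((-1 : ℝ) • (X * Xᵀ))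
  have h2 := rank_smul_le' (-1 : ℝ) (X * Xᵀ)
  have h3 := (Matrix.rank_mul_le_left U Uᵀ).trans (U.rank_le_card_width.trans_eq (Fintype.card_fin r))
  have h4 := (Matrix.rank_mul_le_left X Xᵀ).trans (X.rank_le_card_width.trans_eq (Fintype.card_fin r))
  omega

lemma rank_HU_le (H U : Matrix (Fin n) (Fin r) ℝ) : (H * Uᵀ).rank ≤ r := by
  exact (Matrix.rank_mul_le_left H Uᵀ).trans (H.rank_le_card_width.trans_eq (Fintype.card_fin r))

theorem gradient_concentration'
    (A : Fin m → Matrix (Fin n) (Fin n) ℝ) (δ : ℝ)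
    (hRIP : HasRIP A (4 * r) δ)
    (X U : Matrix (Fin n) (Fin r) ℝ) :
    (∀ H : Matrix (Fin n) (Fin r) ℝ,
      |mip ((U * Uᵀ - X * Xᵀ) * U - ∑ k, mip (A k) (U * Uᵀ - X * Xᵀ) • (A k * U)) H| ≤
        δ * frob (U * Uᵀ - X * Xᵀ) * frob (H * Uᵀ)) ∧
    frob ((∑ k, mip (A k) (U * Uᵀ - X * Xᵀ) • (A k * U)) - (U * Uᵀ - X * Xᵀ) * U) ≤
      δ * frob (U * Uᵀ - X * Xᵀ) * opNorm U := by
  set Y := U * Uᵀ - X * Xᵀ with hYdef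
  have hYrank : Y.rank ≤ 2 * r := rank_Y_le U X
  have parti : ∀ H : Matrix (Fin n) (Fin r) ℝ,
      |mip (Y * U - ∑ k, mip (A k) Y • (A k * U)) H| ≤ δ * frob Y * frob (H * Uᵀ) := by
    intro H
    have hexp : mip (Y * U - ∑ k, mip (A k) Y • (A k * U)) H =
        mip Y (H * Uᵀ) - ∑ k, mapA A Y k * mapA A (H * Uᵀ) k := by
      rw [mip_sub_left, mip_sum_left, mip_mul_right]
      congr 1
      refine Finset.sum_congr rfl fun k _ => ?_
      rw [mip_smul_left, mip_mul_right]
      rfl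
    rw [hexp, abs_sub_comm]
    exact cross_rip A δ hRIP Y (H * Uᵀ) hYrank (rank_HU_le H U)
  refine ⟨parti, ?_⟩
  set D := (∑ k, mip (A k) Y • (A k * U)) - Y * U with hDdef
  have hneg : Y * U - ∑ k, mip (A k) Y • (A k * U) = -D := by
    rw [hDdef, neg_sub]
  have h1 : frob D ^ 2 ≤ δ * frob Y * frob (D * Uᵀ) := by
    have := parti D
    rw [hneg, mip_neg_left, ← frob_sq, abs_neg, abs_of_nonneg (sq_nonneg _)] at this
    exact this
  have h2 : frob (D * Uᵀ) ≤ opNorm U * frob D := frob_mul_transpose_le D U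
  rcases eq_or_ne (frob D) 0 with hD0 | hD0
  · rw [hD0]
    rcases eq_or_ne (frob Y) 0 with hY0 | hY0
    · rw [hY0]; simp
    · have hY' : 0 < frob Y := lt_of_le_of_ne (frob_nonneg Y) (Ne.symm hY0)
      obtain ⟨lo, hi⟩ := hRIP Y (by omega)
      have hδ : 0 ≤ δ := by nlinarith [pow_pos hY' 2, lo.trans hi]
      exact mul_nonneg (mul_nonneg hδ (frob_nonneg Y)) (opNorm_nonneg U)
  · have hD' : 0 < frob D := lt_of_le_of_ne (frob_nonneg D) (Ne.symm hD0)
    have hdp : 0 ≤ δ * frob Y := by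
      by_contra hcon
      push_neg at hcon
      nlinarith [frob_nonneg (D * Uᵀ), pow_pos hD' 2]
    have h3 : frob D ^ 2 ≤ δ * frob Y * (opNorm U * frob D) :=
      h1.trans (mul_le_mul_of_nonneg_left h2 hdp)
    nlinarith [h3, hD']

end main

/-- Gradient concentration via RIP. -/
theorem gradient_concentration {n r m : ℕ}
    (A : Fin m → Matrix (Fin n) (Fin n) ℝ) (δ : ℝ)
    (hRIP : HasRIP A (4 * r) δ)
    (X U : Matrix (Fin n) (Fin r) ℝ)
    (hU : pdist U X ≤ (1 / 4) * opNorm X) :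
    (∀ H : Matrix (Fin n) (Fin r) ℝ,
      |mip ((U * Uᵀ - X * Xᵀ) * U - ∑ k, mip (A k) (U * Uᵀ - X * Xᵀ) • (A k * U)) H| ≤
        δ * frob (U * Uᵀ - X * Xᵀ) * frob (H * Uᵀ)) ∧
    frob ((∑ k, mip (A k) (U * Uᵀ - X * Xᵀ) • (A k * U)) - (U * Uᵀ - X * Xᵀ) * U) ≤
      δ * frob (U * Uᵀ - X * Xᵀ) * opNorm U := by
  exact gradient_concentration' A δ hRIP X U
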